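/- Let α ∈ (0,1). Then: (i) ∫_{ℝ≥0×ℝ≥0} α^(max(s,t)) ds dt = 2/(ln α)²; (ii) for every γ ∈ (0, α^(−1/2)) with γ ≠ 1, ∫_{ℝ≥0×ℝ≥0} α^(max(s,t))·γ^(|s−t|) ds dt = 2/(ln α · ln(αγ)); (iii) ∫_{ℝ≥0×ℝ≥0} (α^(max(s,t)+s+t) − (1/3)·α^(3·max(s,t))) ds dt = 7/(27(ln α)²). -/

import Mathlib

open MeasureTheory Set Real Filter




lemma aux_tendsto_exp {c : ℝ} (hc : c < 0) :
    Tendsto (fun x : ℝ => Real.exp (c * x)) atTop (nhds 0) := by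
  have h1 : Tendsto (fun x : ℝ => c * x) atTop atBot := by
    simpa using (tendsto_const_mul_atBot_of_neg hc).mpr (tendsto_id (α := ℝ))
  exact Real.tendsto_exp_atBot.comp h1

lemma aux_intOn_exp {c : ℝ} (hc : c < 0) (a : ℝ) :
    IntegrableOn (fun x : ℝ => Real.exp (c * x)) (Ioi a) := by
  have := exp_neg_integrableOn_Ioi a (neg_pos.mpr hc)
  simpa using this

lemma aux_int_exp_Ioi {c : ℝ} (hc : c < 0) (a : ℝ) :
    ∫ x in Ioi a, Real.exp (c * x) = -(Real.exp (c * a) / c) := by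
  have hd : ∀ x ∈ Ici a, HasDerivAt (fun y => Real.exp (c * y) / c) (Real.exp (c * x)) x := by
    intro x _
    have h1 : HasDerivAt (fun y : ℝ => c * y) c x := by
      simpa using (hasDerivAt_id x).const_mul c
    have h2 := ((Real.hasDerivAt_exp (c * x)).comp x h1).div_const c
    simpa [mul_div_assoc, mul_div_cancel_left₀, hc.ne] using h2
  have ht : Tendsto (fun y : ℝ => Real.exp (c * y) / c) atTop (nhds 0) := by
    simpa using (aux_tendsto_exp hc).div_const c
  have := integral_Ioi_of_hasDerivAt_of_tendsto' hd (aux_intOn_exp hc a) ht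
  simpa using this



lemma aux_tendsto_mul_exp {c : ℝ} (hc : c < 0) :
    Tendsto (fun x : ℝ => x * Real.exp (c * x)) atTop (nhds 0) := by
  have h1 : Tendsto (fun x : ℝ => (-c) * x) atTop atTop :=
    (tendsto_const_mul_atTop_of_pos (by linarith)).mpr tendsto_id
  have h2 := ((Real.tendsto_pow_mul_exp_neg_atTop_nhds_zero 1).comp h1).const_mul (1 / (-c))
  rw [mul_zero] at h2
  refine h2.congr fun x => ?_
  have hc' : c ≠ 0 := hc.ne
  simp only [Function.comp_apply, pow_one, neg_neg, neg_mul]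
  field_simp

lemma aux_hasDeriv_mul_exp {c : ℝ} (hc : c < 0) (x : ℝ) :
    HasDerivAt (fun y : ℝ => (y / c - 1 / c ^ 2) * Real.exp (c * y))
      (x * Real.exp (c * x)) x := by
  have h1 : HasDerivAt (fun y : ℝ => c * y) c x := by
    simpa using (hasDerivAt_id x).const_mul c
  have h2 : HasDerivAt (fun y : ℝ => Real.exp (c * y)) (Real.exp (c * x) * c) x :=
    (Real.hasDerivAt_exp (c * x)).comp x h1
  have h3 : HasDerivAt (fun y : ℝ => y / c - 1 / c ^ 2) (1 / c) x :=
    ((hasDerivAt_id' x).div_const c).sub_const (1 / c ^ 2)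
  have h4 := h3.mul h2
  convert h4 using 1
  · rfl
  · rfl
  · rfl
  have hc' : c ≠ 0 := hc.ne
  field_simp
  ring

lemma aux_tendsto_F {c : ℝ} (hc : c < 0) :
    Tendsto (fun y : ℝ => (y / c - 1 / c ^ 2) * Real.exp (c * y)) atTop (nhds 0) := by
  have h1 := (aux_tendsto_mul_exp hc).div_const c
  have h2 := (aux_tendsto_exp hc).const_mul (1 / c ^ 2)
  have h3 := h1.sub h2
  simp only [zero_div, mul_zero, sub_zero, zero_sub, neg_zero] at h3
  refine h3.congr fun x => ?_
  ring

lemma aux_intOn_mul_exp {c : ℝ} (hc : c < 0) :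
    IntegrableOn (fun x : ℝ => x * Real.exp (c * x)) (Ioi 0) :=
  integrableOn_Ioi_deriv_of_nonneg' (fun x _ => aux_hasDeriv_mul_exp hc x)
    (fun x hx => mul_nonneg (le_of_lt hx) (Real.exp_pos _).le) (aux_tendsto_F hc)

lemma aux_int_mul_exp {c : ℝ} (hc : c < 0) :
    ∫ x in Ioi 0, x * Real.exp (c * x) = 1 / c ^ 2 := by
  have := integral_Ioi_of_hasDerivAt_of_nonneg' (fun x _ => aux_hasDeriv_mul_exp hc x)
    (fun x hx => mul_nonneg (le_of_lt hx) (Real.exp_pos _).le) (aux_tendsto_F hc)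
  rw [this]
  simp



lemma core_int {c d : ℝ} (hc : c < 0) (hcd : c + d < 0) :
    IntegrableOn (fun p : ℝ × ℝ => Real.exp (c * max p.1 p.2 + d * min p.1 p.2))
      (Ici (0:ℝ) ×ˢ Ici (0:ℝ)) := by
  set k := max c (c + d) / 2 with hk
  have hk0 : k < 0 := by
    rw [hk]
    rcases max_cases c (c + d) with ⟨h1, _⟩ | ⟨h1, _⟩ <;> rw [h1] <;> linarith
  have hexp : IntegrableOn (fun x : ℝ => Real.exp (k * x)) (Ici (0:ℝ)) :=
    Iff.mpr integrableOn_Ici_iff_integrableOn_Ioi (aux_intOn_exp hk0 0)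
  have hdom : IntegrableOn (fun p : ℝ × ℝ => Real.exp (k * p.1) * Real.exp (k * p.2))
      (Ici (0:ℝ) ×ˢ Ici (0:ℝ)) := by
    rw [IntegrableOn, Measure.volume_eq_prod, ← Measure.prod_restrict]
    exact Integrable.mul_prod hexp hexp
  have hmeas : AEStronglyMeasurable
      (fun p : ℝ × ℝ => Real.exp (c * max p.1 p.2 + d * min p.1 p.2))
      (volume.restrict (Ici (0:ℝ) ×ˢ Ici (0:ℝ))) := by
    apply Measurable.aestronglyMeasurable
    exact (((measurable_fst.max measurable_snd).const_mul c).add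
      ((measurable_fst.min measurable_snd).const_mul d)).exp
  refine Integrable.mono hdom hmeas ?_
  rw [ae_restrict_iff' (measurableSet_Ici.prod measurableSet_Ici)]
  refine Filter.Eventually.of_forall fun p hp => ?_
  obtain ⟨hp1, hp2⟩ := hp
  simp only [norm_eq_abs, abs_of_pos (Real.exp_pos _), ← Real.exp_add]
  apply Real.exp_le_exp.mpr
  have hmn : min p.1 p.2 ≤ max p.1 p.2 := min_le_max
  have hn0 : (0:ℝ) ≤ min p.1 p.2 := le_min hp1 hp2
  have hsum : max p.1 p.2 + min p.1 p.2 = p.1 + p.2 := max_add_min p.1 p.2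
  rcases le_total d 0 with hd | hd
  · have h1 : max c (c + d) = c := max_eq_left (by linarith)
    rw [hk, h1]
    nlinarith [mul_nonneg (neg_nonneg.mpr hd) hn0]
  · have h1 : max c (c + d) = c + d := max_eq_right (by linarith)
    rw [hk, h1]
    nlinarith [mul_nonneg (sub_nonneg.mpr hd) (sub_nonneg.mpr hmn),
      mul_nonneg (neg_nonneg.mpr hc.le) (sub_nonneg.mpr hmn)]



lemma inner_split {c d : ℝ} (hc : c < 0) {x : ℝ} (hx : 0 ≤ x) :
    ∫ y in Ici (0:ℝ), Real.exp (c * max x y + d * min x y)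
      = Real.exp (c * x) * (∫ y in Ico (0:ℝ) x, Real.exp (d * y))
        + Real.exp (d * x) * -(Real.exp (c * x) / c) := by
  have hu : Ico (0:ℝ) x ∪ Ici x = Ici 0 := Ico_union_Ici_eq_Ici hx
  have hdisj : Disjoint (Ico (0:ℝ) x) (Ici x) :=
    Set.disjoint_left.mpr fun y hy hy' => absurd hy' (not_le.mpr hy.2)
  have heq1 : EqOn (fun y : ℝ => Real.exp (c * max x y + d * min x y))
      (fun y : ℝ => Real.exp (c * x) * Real.exp (d * y)) (Ico 0 x) := by
    intro y hy
    simp only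
    rw [max_eq_left hy.2.le, min_eq_right hy.2.le, ← Real.exp_add]
  have heq2 : EqOn (fun y : ℝ => Real.exp (c * max x y + d * min x y))
      (fun y : ℝ => Real.exp (d * x) * Real.exp (c * y)) (Ici x) := by
    intro y hy
    simp only
    rw [max_eq_right hy, min_eq_left hy, ← Real.exp_add, add_comm]
  have hint1 : IntegrableOn (fun y : ℝ => Real.exp (c * max x y + d * min x y)) (Ico 0 x) := by
    refine (Continuous.integrableOn_Icc (a := 0) (b := x) ?_).mono_set Ico_subset_Icc_self
    fun_prop
  have hint2 : IntegrableOn (fun y : ℝ => Real.exp (c * max x y + d * min x y)) (Ici x) := by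
    refine IntegrableOn.congr_fun ?_ heq2.symm measurableSet_Ici
    exact (Iff.mpr integrableOn_Ici_iff_integrableOn_Ioi (aux_intOn_exp hc x)).const_mul _
  rw [← hu, setIntegral_union hdisj measurableSet_Ici hint1 hint2,
    setIntegral_congr_fun measurableSet_Ico heq1,
    setIntegral_congr_fun measurableSet_Ici heq2,
    MeasureTheory.integral_const_mul, MeasureTheory.integral_const_mul, integral_Ici_eq_integral_Ioi,
    aux_int_exp_Ioi hc x]

lemma ico_exp {d x : ℝ} (hx : 0 ≤ x) (hd : d ≠ 0) :
    ∫ y in Ico (0:ℝ) x, Real.exp (d * y) = (Real.exp (d * x) - 1) / d := by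
  rw [integral_Ico_eq_integral_Ioo, ← integral_Ioc_eq_integral_Ioo,
    ← intervalIntegral.integral_of_le hx]
  have hder : ∀ y ∈ uIcc (0:ℝ) x, HasDerivAt (fun t => Real.exp (d * t) / d)
      (Real.exp (d * y)) y := by
    intro y _
    have h1 : HasDerivAt (fun t : ℝ => d * t) d y := by
      simpa using (hasDerivAt_id y).const_mul d
    have h2 := ((Real.hasDerivAt_exp (d * y)).comp y h1).div_const d
    simpa [mul_div_assoc, mul_div_cancel_left₀, hd] using h2
  rw [intervalIntegral.integral_eq_sub_of_hasDerivAt hder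
    ((by fun_prop : Continuous fun t : ℝ => Real.exp (d * t)).intervalIntegrable 0 x)]
  simp only [mul_zero, Real.exp_zero]
  ring

lemma core_val {c d : ℝ} (hc : c < 0) (hcd : c + d < 0) :
    ∫ p in Ici (0:ℝ) ×ˢ Ici (0:ℝ), Real.exp (c * max p.1 p.2 + d * min p.1 p.2)
      = 2 / (c * (c + d)) := by
  have hint := core_int hc hcd
  rw [Measure.volume_eq_prod] at hint ⊢
  rw [setIntegral_prod _ hint]
  rcases eq_or_ne d 0 with rfl | hd
  · have hg : ∀ x ∈ Ici (0:ℝ),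
        (∫ y in Ici (0:ℝ), Real.exp (c * max x y + 0 * min x y))
          = x * Real.exp (c * x) - (1/c) * Real.exp (c * x) := by
      intro x hx
      have hx' : (0:ℝ) ≤ x := hx
      rw [inner_split hc hx']
      have : ∫ y in Ico (0:ℝ) x, Real.exp (0 * y) = x := by
        simp [Real.volume_Ico, hx']
      rw [this]
      simp only [zero_mul, Real.exp_zero]
      ring
    rw [setIntegral_congr_fun measurableSet_Ici hg, integral_Ici_eq_integral_Ioi,
      integral_sub (aux_intOn_mul_exp hc) ((aux_intOn_exp hc 0).const_mul _),
      MeasureTheory.integral_const_mul, aux_int_mul_exp hc, aux_int_exp_Ioi hc 0]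
    have hc0 : c ≠ 0 := hc.ne
    simp only [mul_zero, Real.exp_zero]
    field_simp
    rw [add_zero, mul_div_cancel_left₀ 2 hc0]
    ring
  · have hg : ∀ x ∈ Ici (0:ℝ),
        (∫ y in Ici (0:ℝ), Real.exp (c * max x y + d * min x y))
          = (1/d - 1/c) * Real.exp ((c + d) * x) - (1/d) * Real.exp (c * x) := by
      intro x hx
      rw [inner_split hc hx, ico_exp hx hd, add_mul, Real.exp_add]
      have hc0 : c ≠ 0 := hc.ne
      field_simp
      ring
    rw [setIntegral_congr_fun measurableSet_Ici hg, integral_Ici_eq_integral_Ioi,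
      integral_sub ((aux_intOn_exp hcd 0).const_mul _) ((aux_intOn_exp hc 0).const_mul _),
      MeasureTheory.integral_const_mul, MeasureTheory.integral_const_mul,
      aux_int_exp_Ioi hcd 0, aux_int_exp_Ioi hc 0]
    have hc0 : c ≠ 0 := hc.ne
    have hcd0 : c + d ≠ 0 := hcd.ne
    simp only [mul_zero, Real.exp_zero]
    field_simp
    ring


/-- `‖φ₀‖²` for the continuous-time standard stable kernels:
(i) `∫_{ℝ≥0×ℝ≥0} α^(max(s,t)) = 2/(ln α)²`;
(ii) `∫_{ℝ≥0×ℝ≥0} α^(max(s,t))·γ^|s−t| = 2/(ln α · ln(αγ))` for `γ ∈ (0, α^(−1/2))`, `γ ≠ 1`;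
(iii) `∫_{ℝ≥0×ℝ≥0} (α^(max(s,t)+s+t) − (1/3)α^(3 max(s,t))) = 7/(27(ln α)²)`. -/
theorem norm_phi0_sq_TC_DC_SS
    (α : ℝ) (hα : α ∈ Set.Ioo (0 : ℝ) 1) :
    (∫ p in Set.Ici (0 : ℝ) ×ˢ Set.Ici (0 : ℝ), α ^ max p.1 p.2 =
      2 / (Real.log α) ^ 2) ∧
    (∀ γ : ℝ, γ ∈ Set.Ioo (0 : ℝ) (α ^ (-1/2 : ℝ)) → γ ≠ 1 →
      ∫ p in Set.Ici (0 : ℝ) ×ˢ Set.Ici (0 : ℝ), α ^ max p.1 p.2 * γ ^ |p.1 - p.2| =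
        2 / (Real.log α * Real.log (α * γ))) ∧
    (∫ p in Set.Ici (0 : ℝ) ×ˢ Set.Ici (0 : ℝ),
        (α ^ (max p.1 p.2 + p.1 + p.2) - (1/3) * α ^ (3 * max p.1 p.2)) =
      7 / (27 * (Real.log α) ^ 2)) := by
  obtain ⟨hα0, hα1⟩ := hα
  have hL : Real.log α < 0 := Real.log_neg hα0 hα1
  have hL0 : Real.log α ≠ 0 := hL.ne
  refine ⟨?_, ?_, ?_⟩
  · -- TC kernel
    have h1 : (∫ p in Set.Ici (0 : ℝ) ×ˢ Set.Ici (0 : ℝ), α ^ max p.1 p.2)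
        = ∫ p in Set.Ici (0 : ℝ) ×ˢ Set.Ici (0 : ℝ),
            Real.exp (Real.log α * max p.1 p.2 + 0 * min p.1 p.2) := by
      apply integral_congr_ae
      filter_upwards with p
      rw [Real.rpow_def_of_pos hα0, zero_mul, add_zero]
    rw [h1, core_val hL (by simpa using hL)]
    rw [add_zero, ← pow_two]
  · -- DC kernel
    intro γ hγ _
    obtain ⟨hγ0, hγ2⟩ := hγ
    have hαγ1 : α * γ < 1 := by
      have h2 : α * α ^ (-1/2 : ℝ) = α ^ (1/2 : ℝ) := by
        nth_rewrite 1 [← Real.rpow_one α]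
        rw [← Real.rpow_add hα0]
        norm_num
      have h3 : α * γ < α ^ (1/2 : ℝ) := by
        rw [← h2]
        exact mul_lt_mul_of_pos_left hγ2 hα0
      exact h3.trans (Real.rpow_lt_one hα0.le hα1 (by norm_num))
    have hc : Real.log α + Real.log γ < 0 := by
      rw [← Real.log_mul hα0.ne' hγ0.ne']
      exact Real.log_neg (mul_pos hα0 hγ0) hαγ1
    have hcd : Real.log α + Real.log γ + (-Real.log γ) < 0 := by linarith
    have h1 : (∫ p in Set.Ici (0 : ℝ) ×ˢ Set.Ici (0 : ℝ), α ^ max p.1 p.2 * γ ^ |p.1 - p.2|)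
        = ∫ p in Set.Ici (0 : ℝ) ×ˢ Set.Ici (0 : ℝ),
            Real.exp ((Real.log α + Real.log γ) * max p.1 p.2
              + (-Real.log γ) * min p.1 p.2) := by
      apply integral_congr_ae
      filter_upwards with p
      rw [Real.rpow_def_of_pos hα0, Real.rpow_def_of_pos hγ0, ← Real.exp_add]
      congr 1
      rw [← max_sub_min_eq_abs, max_comm p.2 p.1, min_comm p.2 p.1]
      ring
    rw [h1, core_val hc hcd, Real.log_mul hα0.ne' hγ0.ne']
    ring_nf
  · -- SS kernel
    have hc1 : 2 * Real.log α < 0 := by linarith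
    have hcd1 : 2 * Real.log α + Real.log α < 0 := by linarith
    have hc2 : 3 * Real.log α < 0 := by linarith
    have hcd2 : 3 * Real.log α + 0 < 0 := by linarith
    have hi1 := core_int hc1 hcd1
    have hi2 := core_int hc2 hcd2
    have h1 : (∫ p in Set.Ici (0 : ℝ) ×ˢ Set.Ici (0 : ℝ),
          (α ^ (max p.1 p.2 + p.1 + p.2) - (1/3) * α ^ (3 * max p.1 p.2)))
        = ∫ p in Set.Ici (0 : ℝ) ×ˢ Set.Ici (0 : ℝ),
            (Real.exp ((2 * Real.log α) * max p.1 p.2 + Real.log α * min p.1 p.2)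
              - (1/3) * Real.exp ((3 * Real.log α) * max p.1 p.2 + 0 * min p.1 p.2)) := by
      apply integral_congr_ae
      filter_upwards with p
      have e1 : α ^ (max p.1 p.2 + p.1 + p.2)
          = Real.exp ((2 * Real.log α) * max p.1 p.2 + Real.log α * min p.1 p.2) := by
        rw [Real.rpow_def_of_pos hα0]
        congr 1
        linear_combination (-Real.log α) * (max_add_min p.1 p.2)
      have e2 : α ^ (3 * max p.1 p.2)
          = Real.exp ((3 * Real.log α) * max p.1 p.2 + 0 * min p.1 p.2) := by
        rw [Real.rpow_def_of_pos hα0]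
        congr 1
        ring
      rw [e1, e2]
    rw [h1, integral_sub hi1 (hi2.const_mul _), MeasureTheory.integral_const_mul,
      core_val hc1 hcd1, core_val hc2 hcd2]
    have h6 : (2*Real.log α)*(2*Real.log α + Real.log α) = 6 * Real.log α^2 := by ring
    have h9 : (3*Real.log α)*(3*Real.log α + 0) = 9 * Real.log α^2 := by ring
    rw [h6, h9]
    have hsq : Real.log α ^ 2 ≠ 0 := pow_ne_zero 2 hL0
    field_simp
    ring
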